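/- Abstract analytic Fredholm discreteness: Let X be a Hilbert space, A : X → X bounded and invertible, and k ↦ B_k an analytic family of compact operators on X defined for k ∈ ℂ with B_0 = 0. Then the set {k ∈ ℂ : A + B_k is not injective} is at most discrete (has no accumulation points). -/

import Mathlib

open Filter

set_option maxHeartbeats 1000000
set_option linter.unusedSectionVars false

section FredholmAux

open Function Set Topology

variable {X : Type*} [NormedAddCommGroup X] [InnerProductSpace ℂ X] [CompleteSpace X]

/-- Finite-rank approximation of compact operators on a Hilbert space. -/
lemma finite_rank_approx' (C : X →L[ℂ] X) (hC : IsCompactOperator C) {ε : ℝ} (hε : 0 < ε) :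
    ∃ (V : Submodule ℂ X) (F : X →L[ℂ] X), FiniteDimensional ℂ V ∧ (∀ x, F x ∈ V) ∧
      ‖C - F‖ ≤ ε := by
  have hK : IsCompact (closure (C '' Metric.closedBall 0 1)) :=
    hC.isCompact_closure_image_closedBall 1
  obtain ⟨t, htfin, htcov⟩ :=
    (Metric.totallyBounded_iff.mp hK.totallyBounded) ε hε
  set V : Submodule ℂ X := Submodule.span ℂ (t : Set X) with hV
  haveI hfin : FiniteDimensional ℂ V := FiniteDimensional.span_of_finite ℂ htfin
  haveI : CompleteSpace V := FiniteDimensional.complete ℂ V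
  set F : X →L[ℂ] X := V.subtypeL.comp (V.orthogonalProjectionOnto.comp C) with hF
  refine ⟨V, F, hfin, fun x => (V.orthogonalProjectionOnto (C x)).2, ?_⟩
  have key : ∀ u : X, ‖u‖ ≤ 1 → ‖C u - F u‖ ≤ ε := by
    intro u hu
    have hmem : C u ∈ closure (C '' Metric.closedBall 0 1) :=
      subset_closure ⟨u, by simpa [Metric.mem_closedBall] using hu, rfl⟩
    obtain ⟨y, hyt, hy⟩ := Set.mem_iUnion₂.mp (htcov hmem)
    have hyV : y ∈ V := Submodule.subset_span hyt
    have h1 : ‖C u - F u‖ = ⨅ x : V, ‖C u - x‖ := by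
      exact Submodule.starProjection_minimal (U := V) (C u)
    have h2 : (⨅ x : V, ‖C u - x‖) ≤ ‖C u - y‖ := by
      exact ciInf_le ⟨0, fun a ⟨v, hv⟩ => hv ▸ norm_nonneg _⟩ (⟨y, hyV⟩ : V)
    have h3 : ‖C u - y‖ ≤ ε := by
      have := Metric.mem_ball.mp hy
      rw [dist_eq_norm] at this
      exact this.le
    linarith [h1 ▸ h2]
  refine ContinuousLinearMap.opNorm_le_bound _ hε.le fun x => ?_
  rcases eq_or_ne x 0 with rfl | hx
  · simp
  · have hnx : (0:ℝ) < ‖x‖ := norm_pos_iff.mpr hx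
    obtain ⟨u, hxu, hun⟩ : ∃ u : X, x = (‖x‖ : ℂ) • u ∧ ‖u‖ ≤ 1 := by
      refine ⟨((‖x‖ : ℂ))⁻¹ • x, ?_, ?_⟩
      · rw [smul_smul, mul_inv_cancel₀ (by exact_mod_cast hnx.ne'), one_smul]
      · rw [norm_smul]
        simp [norm_inv, hnx.ne']
    have h4 : ‖(C - F) u‖ ≤ ε := by
      simpa [ContinuousLinearMap.sub_apply] using key u hun
    calc ‖(C - F) x‖ = ‖x‖ * ‖(C - F) u‖ := by
          have h5 : (C - F) x = (‖x‖ : ℂ) • (C - F) u := by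
            conv_lhs => rw [hxu]
            exact map_smul _ _ _
          rw [h5, norm_smul, Complex.norm_real, Real.norm_of_nonneg (norm_nonneg x)]
      _ ≤ ‖x‖ * ε := mul_le_mul_of_nonneg_left h4 hnx.le
      _ = ε * ‖x‖ := mul_comm _ _


/-- Injectivity vs determinant for endomorphisms of finite-dimensional spaces. -/
lemma inj_iff_det_ne_zero {W : Type*} [AddCommGroup W] [Module ℂ W] [FiniteDimensional ℂ W]
    {ι : Type*} [Fintype ι] [DecidableEq ι] (b : Module.Basis ι ℂ W) (T : W →ₗ[ℂ] W) :
    Function.Injective T ↔ (LinearMap.toMatrix b b T).det ≠ 0 := by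
  constructor
  · intro hinj
    have hbij : Function.Bijective T := ⟨hinj, LinearMap.injective_iff_surjective.mp hinj⟩
    have h1 : IsUnit (LinearMap.det ((LinearEquiv.ofBijective T hbij : W →ₗ[ℂ] W))) :=
      (LinearEquiv.ofBijective T hbij).isUnit_det'
    have h2 : ((LinearEquiv.ofBijective T hbij : W →ₗ[ℂ] W)) = T :=
      LinearMap.ext fun x => LinearEquiv.ofBijective_apply _ _
    rw [h2, ← LinearMap.det_toMatrix b] at h1
    exact h1.ne_zero
  · intro hne
    have hunit : IsUnit (LinearMap.toMatrix b b T).det := isUnit_iff_ne_zero.mpr hne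
    have hcoe : ⇑(LinearEquiv.ofIsUnitDet hunit) = ⇑T := by
      ext v
      exact LinearEquiv.ofIsUnitDet_apply hunit v
    have := (LinearEquiv.ofIsUnitDet hunit).injective
    rwa [hcoe] at this

/-- Restriction of `1 + H` to a subspace containing the range of `H`. -/
noncomputable def restrOp (V : Submodule ℂ X) (H : X →L[ℂ] X) (hH : ∀ x, H x ∈ V) :
    V →ₗ[ℂ] V :=
  LinearMap.id + LinearMap.codRestrict V ((H : X →ₗ[ℂ] X).comp V.subtype) (fun v => hH v)

lemma restrOp_apply (V : Submodule ℂ X) (H : X →L[ℂ] X) (hH : ∀ x, H x ∈ V) (v : V) :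
    ((restrOp V H hH v : V) : X) = (v : X) + H v := rfl

lemma inj_one_add_iff_restr (V : Submodule ℂ X) (H : X →L[ℂ] X) (hH : ∀ x, H x ∈ V) :
    Function.Injective ⇑(1 + H) ↔ Function.Injective (restrOp V H hH) := by
  have happ : ∀ x : X, (1 + H) x = x + H x := fun x => by
    simp [ContinuousLinearMap.add_apply]
  constructor
  · intro h a c hac
    have hval : ((restrOp V H hH a : V) : X) = ((restrOp V H hH c : V) : X) := by rw [hac]
    rw [restrOp_apply, restrOp_apply, ← happ, ← happ] at hval
    exact Subtype.ext (h hval)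
  · intro h x y hxy
    have hker : ∀ w : X, (1 + H) w = 0 → w = 0 := by
      intro w hw
      rw [happ] at hw
      have hwV : w ∈ V := by
        have hw' : w = -(H w) := by
          rw [eq_neg_iff_add_eq_zero]
          exact hw
        rw [hw']
        exact neg_mem (hH _)
      have hT0 : restrOp V H hH ⟨w, hwV⟩ = 0 := by
        apply Subtype.ext
        rw [restrOp_apply]
        exact hw
      have h2 : restrOp V H hH ⟨w, hwV⟩ = restrOp V H hH 0 := by rw [hT0, map_zero]
      exact congrArg Subtype.val (h h2)
    have h0 : (1 + H) (x - y) = 0 := by rw [map_sub, hxy, sub_self]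
    exact sub_eq_zero.mp (hker _ h0)

lemma toMatrix_restrOp (V : Submodule ℂ X) [FiniteDimensional ℂ V] [CompleteSpace V]
    {ι : Type*} [Fintype ι] [DecidableEq ι] (b : Module.Basis ι ℂ V)
    (H : X →L[ℂ] X) (hH : ∀ x, H x ∈ V) (i j : ι) :
    LinearMap.toMatrix b b (restrOp V H hH) i j =
      b.coord i (V.orthogonalProjectionOnto (((b j : V) : X) + H ((b j : V) : X))) := by
  rw [LinearMap.toMatrix_apply]
  have hmem : ((b j : V) : X) + H ((b j : V) : X) ∈ V := add_mem (b j).2 (hH _)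
  have h1 : V.orthogonalProjectionOnto (((b j : V) : X) + H ((b j : V) : X)) =
      restrOp V H hH (b j) := by
    apply Subtype.ext
    rw [restrOp_apply]
    exact Submodule.starProjection_eq_self_iff.mpr hmem
  rw [h1, Module.Basis.coord_apply]

/-- Injectivity of a composition with a bijection. -/
lemma inj_comp_bij {f g : X → X} (hg : Function.Bijective g) :
    Function.Injective (f ∘ g) ↔ Function.Injective f := by
  constructor
  · intro h a c hac
    obtain ⟨a', rfl⟩ := hg.2 a
    obtain ⟨c', rfl⟩ := hg.2 c
    exact congrArg g (h hac)
  · exact fun h => h.comp hg.1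

lemma local_dichotomy (C : ℂ → (X →L[ℂ] X)) (hA : ∀ k, AnalyticAt ℂ C k)
    (hK : ∀ k, IsCompactOperator (C k)) (z : ℂ) :
    (∀ᶠ k in 𝓝 z, ¬ Function.Injective ⇑(1 + C k)) ∨
      (∀ᶠ k in 𝓝[≠] z, Function.Injective ⇑(1 + C k)) := by
  obtain ⟨V, F, hfin, hFV, hF⟩ :=
    finite_rank_approx' (C z) (hK z) (by norm_num : (0:ℝ) < 1/2)
  haveI := hfin
  haveI : CompleteSpace V := FiniteDimensional.complete ℂ V
  have hz1 : ‖F - C z‖ < 1 := by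
    calc ‖F - C z‖ = ‖C z - F‖ := norm_sub_rev _ _
      _ ≤ 1/2 := hF
      _ < 1 := by norm_num
  set u0 : (X →L[ℂ] X)ˣ := Units.oneSub (F - C z) hz1 with hu0
  set G : ℂ → (X →L[ℂ] X) := fun k => 1 - (F - C k) with hGdef
  have hGz : G z = ↑u0 := by rw [hu0, Units.val_oneSub]
  have hGan : AnalyticAt ℂ G z := analyticAt_const.sub (analyticAt_const.sub (hA z))
  have hNan : AnalyticAt ℂ (fun k => Ring.inverse (G k)) z := by
    have h1 : AnalyticAt ℂ (Ring.inverse : (X →L[ℂ] X) → (X →L[ℂ] X)) (G z) := by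
      rw [hGz]; exact analyticAt_inverse (𝕜 := ℂ) u0
    exact h1.comp hGan
  have hsmall : ∀ᶠ k in 𝓝 z, ‖F - C k‖ < 1 := by
    have hcont : ContinuousAt (fun k => ‖F - C k‖) z :=
      (continuous_norm.continuousAt).comp (continuousAt_const.sub (hA z).continuousAt)
    exact Filter.Tendsto.eventually_lt_const hz1 hcont
  -- the finite-rank operators
  set H : ℂ → (X →L[ℂ] X) := fun k => F * Ring.inverse (G k) with hHdef
  have hHV : ∀ k, ∀ x, H k x ∈ V := by
    intro k x
    exact hFV _
  have hHan : AnalyticAt ℂ H z := analyticAt_const.mul hNan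
  -- the determinant function
  set b : Module.Basis (Fin (Module.finrank ℂ V)) ℂ V := Module.finBasis ℂ V with hb
  set d : ℂ → ℂ := fun k =>
    (LinearMap.toMatrix b b (restrOp V (H k) (hHV k))).det with hd
  -- analyticity of d
  have hdan : AnalyticAt ℂ d z := by
    have hentry : ∀ i j, AnalyticAt ℂ
        (fun k => LinearMap.toMatrix b b (restrOp V (H k) (hHV k)) i j) z := by
      intro i j
      have heq : ∀ k, LinearMap.toMatrix b b (restrOp V (H k) (hHV k)) i j =
          ((LinearMap.toContinuousLinearMap (b.coord i)).comp
              V.orthogonalProjectionOnto) (((b j : V) : X)) +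
            (((LinearMap.toContinuousLinearMap (b.coord i)).comp
              V.orthogonalProjectionOnto).comp
                (ContinuousLinearMap.apply ℂ X (((b j : V) : X)))) (H k) := by
        intro k
        rw [toMatrix_restrOp, map_add]
        simp [ContinuousLinearMap.comp_apply, ContinuousLinearMap.apply_apply,
          LinearMap.coe_toContinuousLinearMap']
      have han : AnalyticAt ℂ (fun k =>
          ((LinearMap.toContinuousLinearMap (b.coord i)).comp
              V.orthogonalProjectionOnto) (((b j : V) : X)) +
            (((LinearMap.toContinuousLinearMap (b.coord i)).comp
              V.orthogonalProjectionOnto).comp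
                (ContinuousLinearMap.apply ℂ X (((b j : V) : X)))) (H k)) z :=
        analyticAt_const.add
          ((((LinearMap.toContinuousLinearMap (b.coord i)).comp
              V.orthogonalProjectionOnto).comp
                (ContinuousLinearMap.apply ℂ X (((b j : V) : X)))).analyticAt _ |>.comp hHan)
      exact han.congr (Filter.Eventually.of_forall fun k => (heq k).symm)
    simp only [hd, Matrix.det_apply']
    exact Finset.analyticAt_fun_sum _ fun σ _ =>
      analyticAt_const.mul (Finset.analyticAt_fun_prod _ fun i _ => hentry (σ i) i)
  -- pointwise criterion
  have hkey : ∀ k : ℂ, ‖F - C k‖ < 1 →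
      (Function.Injective ⇑(1 + C k) ↔ d k ≠ 0) := by
    intro k hk
    set u : (X →L[ℂ] X)ˣ := Units.oneSub (F - C k) hk with hu
    have hGk : G k = ↑u := by rw [hu, Units.val_oneSub]
    have hNu : Ring.inverse (G k) = ↑u⁻¹ := by rw [hGk, Ring.inverse_unit]
    have hNG : Ring.inverse (G k) * G k = 1 := by
      rw [hNu, hGk]; exact_mod_cast u.inv_mul
    have fact1 : ((1 : X →L[ℂ] X) + H k) * G k = 1 + C k := by
      rw [hHdef, add_mul, one_mul, mul_assoc, hNG, mul_one, hGdef]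
      beta_reduce
      rw [sub_sub_eq_add_sub, sub_add_cancel]
    have fact2 : Function.Bijective ⇑(G k) := by
      rw [hGk]
      refine Function.bijective_iff_has_inverse.mpr
        ⟨⇑(↑u⁻¹ : X →L[ℂ] X), fun x => ?_, fun x => ?_⟩
      · show ((↑u⁻¹ * ↑u : X →L[ℂ] X)) x = x
        rw [u.inv_mul]; rfl
      · show ((↑u * ↑u⁻¹ : X →L[ℂ] X)) x = x
        rw [u.mul_inv]; rfl
    have hco : ⇑((1 : X →L[ℂ] X) + C k) = ⇑((1 : X →L[ℂ] X) + H k) ∘ ⇑(G k) := by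
      rw [← fact1]; ext x; simp [ContinuousLinearMap.mul_apply]
    calc Function.Injective ⇑(1 + C k)
        ↔ Function.Injective ⇑((1 : X →L[ℂ] X) + H k) := by rw [hco]; exact inj_comp_bij fact2
      _ ↔ Function.Injective (restrOp V (H k) (hHV k)) := inj_one_add_iff_restr V (H k) (hHV k)
      _ ↔ d k ≠ 0 := inj_iff_det_ne_zero b _
  rcases hdan.eventually_eq_zero_or_eventually_ne_zero with hzero | hne
  · left
    filter_upwards [hzero, hsmall] with k h1 h2
    rw [hkey k h2]
    simp [h1]
  · right
    filter_upwards [hne, hsmall.filter_mono nhdsWithin_le_nhds] with k h1 h2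
    exact (hkey k h2).mpr h1


lemma global_injective (C : ℂ → (X →L[ℂ] X)) (hA : ∀ k, AnalyticAt ℂ C k)
    (hK : ∀ k, IsCompactOperator (C k)) (hC0 : C 0 = 0) (z : ℂ) :
    ∀ᶠ k in 𝓝[≠] z, Function.Injective ⇑(1 + C k) := by
  set E : Set ℂ := {w | ∀ᶠ k in 𝓝 w, ¬ Function.Injective ⇑(1 + C k)} with hE
  have hEopen : IsOpen E := isOpen_setOf_eventually_nhds
  have hEcopen : IsOpen Eᶜ := by
    rw [isOpen_iff_mem_nhds]
    intro w hw
    have hdich := (local_dichotomy C hA hK w).resolve_left hw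
    rw [eventually_nhdsWithin_iff] at hdich
    have h2 : ∀ᶠ k in 𝓝 w, ∀ᶠ y in 𝓝 k, y ≠ w → Function.Injective ⇑(1 + C y) :=
      hdich.eventually_nhds
    refine Filter.mem_of_superset h2 ?_
    intro k hk
    simp only [Set.mem_compl_iff, hE, Set.mem_setOf_eq]
    intro hkE
    rcases eq_or_ne k w with rfl | hkw
    · have hboth : ∀ᶠ y in 𝓝[≠] k, False := by
        filter_upwards [hdich.filter_mono nhdsWithin_le_nhds,
          hkE.filter_mono nhdsWithin_le_nhds, self_mem_nhdsWithin] with y h1 h2 h3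
        exact h2 (h1 h3)
      exact hboth.exists.elim fun y hy => hy
    · have hne : ∀ᶠ y in 𝓝 k, y ≠ w := IsOpen.eventually_mem isOpen_ne hkw
      have hboth : ∀ᶠ y in 𝓝 k, False := by
        filter_upwards [hk, hkE, hne] with y h1 h2 h3
        exact h2 (h1 h3)
      exact hboth.exists.elim fun y hy => hy
  have h0 : (0 : ℂ) ∉ E := by
    intro h
    have := h.self_of_nhds
    apply this
    rw [hC0, add_zero]
    exact fun a b hab => hab
  have hclopen : IsClopen E := ⟨isOpen_compl_iff.mp hEcopen, hEopen⟩
  have hempty : E = ∅ := by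
    rcases isClopen_iff.mp hclopen with h | h
    · exact h
    · exact absurd (h ▸ Set.mem_univ (0:ℂ)) h0
  have hz : z ∉ E := by rw [hempty]; exact Set.notMem_empty z
  exact (local_dichotomy C hA hK z).resolve_left hz


end FredholmAux

open Function Topology in
/-- abstract analytic Fredholm discreteness.  If `A : X → X` is bounded and
invertible on a Hilbert space `X` and `k ↦ B k` is an analytic family of compact operators
on `X` with `B 0 = 0`, then `{k ∈ ℂ : A + B k is not injective}` has no accumulation
points in `ℂ`. -/
theorem analytic_fredholm_discreteness
    {X : Type*} [NormedAddCommGroup X] [InnerProductSpace ℂ X] [CompleteSpace X]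
    (A : X ≃L[ℂ] X) (B : ℂ → (X →L[ℂ] X))
    (hB_analytic : ∀ k : ℂ, AnalyticAt ℂ B k)
    (hB_compact : ∀ k : ℂ, IsCompactOperator (B k))
    (hB0 : B 0 = 0) :
    ∀ z : ℂ, ¬ AccPt z (Filter.principal
      {k : ℂ | ¬ Function.Injective ((A : X →L[ℂ] X) + B k)}) := by
  set C : ℂ → (X →L[ℂ] X) := fun k => (A.symm : X →L[ℂ] X).comp (B k) with hC
  have hCan : ∀ k, AnalyticAt ℂ C k := by
    intro k
    exact ((ContinuousLinearMap.compL ℂ X X X (A.symm : X →L[ℂ] X)).analyticAt _).comp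
      (hB_analytic k)
  have hCcomp : ∀ k, IsCompactOperator (C k) := by
    intro k
    exact (hB_compact k).continuous_comp (A.symm : X →L[ℂ] X).continuous
  have hC0 : C 0 = 0 := by rw [hC]; simp [hB0]
  have hinj : ∀ k, (Function.Injective ⇑((A : X →L[ℂ] X) + B k) ↔
      Function.Injective ⇑(1 + C k)) := by
    intro k
    have hcomp : ⇑((A : X →L[ℂ] X) + B k) = ⇑(A : X →L[ℂ] X) ∘ ⇑(1 + C k) := by
      ext x
      simp only [ContinuousLinearMap.add_apply, Function.comp_apply,
        ContinuousLinearMap.one_apply, ContinuousLinearMap.coe_coe,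
        ContinuousLinearMap.comp_apply, hC]
      rw [map_add]
      simp
    rw [hcomp]
    exact Function.Injective.of_comp_iff A.injective _
  intro z hacc
  rw [accPt_iff_frequently] at hacc
  have hglob := global_injective C hCan hCcomp hC0 z
  rw [eventually_nhdsWithin_iff] at hglob
  have : ∀ᶠ y in 𝓝 z, ¬ (y ≠ z ∧ y ∈ {k : ℂ | ¬ Function.Injective ((A : X →L[ℂ] X) + B k)}) := by
    filter_upwards [hglob] with y h1
    rintro ⟨hy, hy2⟩
    exact hy2 ((hinj y).mpr (h1 hy))
  exact (hacc.and_eventually this).exists.elim fun y hy => hy.2 hy.1
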